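/- Let v₁, …, v_n be distinct pairwise-adjacent vertices of a finite simple graph Γ, let e₁, …, e_n be linearly independent vectors in a real inner product space E, fix a total order ≺ as described, and let b₁, …, b_n be the associated unit vectors. Then the tuple (e₁,…,e_n) is allowable if and only if ⟨b_i, b_j⟩ = 0 for all i ≠ j. -/

import Mathlib

variable {V : Type*}

/-- The star of a vertex: the vertex together with its neighbors. -/
def gstar (Γ : SimpleGraph V) (v : V) : Set V :=
  insert v (Γ.neighborSet v)

/-- Vertices `v` and `w` are twist-related if `st(v) ⊆ st(w)` or
`st(w) ⊆ st(v)`. -/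
def TwistRelated (Γ : SimpleGraph V) (v w : V) : Prop :=
  gstar Γ v ⊆ gstar Γ w ∨ gstar Γ w ⊆ gstar Γ v

variable {E : Type*} [NormedAddCommGroup E] [InnerProductSpace ℝ E]

/-- `K_i`: the span of the vectors `e k` for which `k = i`, or `k ≠ i` and
`st(v i) ⊆ st(v k)`. -/
def Kspan (Γ : SimpleGraph V) {n : ℕ} (v : Fin n → V) (e : Fin n → E)
    (i : Fin n) : Submodule ℝ E :=
  Submodule.span ℝ (e '' {k | k = i ∨ (k ≠ i ∧ gstar Γ (v i) ⊆ gstar Γ (v k))})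

/-- The tuple `e` is allowable if for all `i`, `j` with `v i`, `v j` not
twist-related, the subspaces `K_i ∩ L_ij^⊥` and `K_j ∩ L_ij^⊥` are orthogonal,
where `L_ij = K_i ∩ K_j`. -/
def Allowable (Γ : SimpleGraph V) {n : ℕ} (v : Fin n → V) (e : Fin n → E) :
    Prop :=
  ∀ i j : Fin n, ¬ TwistRelated Γ (v i) (v j) →
    ∀ x ∈ Kspan Γ v e i ⊓ (Kspan Γ v e i ⊓ Kspan Γ v e j)ᗮ,
      ∀ y ∈ Kspan Γ v e j ⊓ (Kspan Γ v e i ⊓ Kspan Γ v e j)ᗮ,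
        (inner ℝ x y : ℝ) = 0

/-- `K_i^≺`: the span of the vectors `e k` with `k ≠ i`, `st(v i) ⊆ st(v k)`
and `i ≺ k`. -/
def KprecSpan (Γ : SimpleGraph V) {n : ℕ} (v : Fin n → V) (e : Fin n → E)
    (prec : Fin n → Fin n → Prop) (i : Fin n) : Submodule ℝ E :=
  Submodule.span ℝ
    (e '' {k | k ≠ i ∧ gstar Γ (v i) ⊆ gstar Γ (v k) ∧ prec i k})

/-- intersection of spans of subfamilies of an independent family -/
lemma span_inter_aux {n : ℕ} {e : Fin n → E} (he : LinearIndependent ℝ e)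
    (s t : Set (Fin n)) :
    Submodule.span ℝ (e '' s) ⊓ Submodule.span ℝ (e '' t) =
      Submodule.span ℝ (e '' (s ∩ t)) := by
  apply le_antisymm
  · rintro x ⟨hxs, hxt⟩
    have hsplit : e '' s = e '' (s ∩ t) ∪ e '' (s \ t) := by
      rw [← Set.image_union, Set.inter_union_diff]
    rw [hsplit, Submodule.span_union] at hxs
    rcases Submodule.mem_sup.mp hxs with ⟨a, ha, c, hc, rfl⟩
    have hat : a ∈ Submodule.span ℝ (e '' t) :=
      Submodule.span_mono (Set.image_mono Set.inter_subset_right) ha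
    have hct : c ∈ Submodule.span ℝ (e '' t) := by
      have : c = (a + c) - a := (add_sub_cancel_left a c).symm
      rw [this]; exact Submodule.sub_mem _ hxt hat
    have hd : Disjoint (Submodule.span ℝ (e '' (s \ t))) (Submodule.span ℝ (e '' t)) :=
      he.disjoint_span_image Set.disjoint_sdiff_left
    have hc0 : c = 0 := Submodule.disjoint_def.mp hd c hc hct
    simpa [hc0] using ha
  · exact le_inf (Submodule.span_mono (Set.image_mono Set.inter_subset_left))
      (Submodule.span_mono (Set.image_mono Set.inter_subset_right))

lemma inner_zero_of_span {x : E} {s : Set E} (h : ∀ g ∈ s, (inner ℝ x g : ℝ) = 0) :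
    ∀ y ∈ Submodule.span ℝ s, (inner ℝ x y : ℝ) = 0 := by
  intro y hy
  induction hy using Submodule.span_induction with
  | mem g hg => exact h g hg
  | zero => simp
  | add a c _ _ ha hc => rw [inner_add_right, ha, hc, add_zero]
  | smul r a _ ha => rw [real_inner_smul_right, ha, mul_zero]

lemma rank_span_image {n : ℕ} {f : Fin n → E} (hf : LinearIndependent ℝ f)
    (s : Set (Fin n)) :
    Module.finrank ℝ (Submodule.span ℝ (f '' s)) = Nat.card s := by
  haveI : Fintype ↥s := Fintype.ofFinite _
  have hli : LinearIndependent ℝ (fun x : ↥s => f ↑x) :=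
    hf.comp Subtype.val Subtype.val_injective
  rw [Set.image_eq_range, finrank_span_eq_card hli]
  exact (Nat.card_eq_fintype_card).symm

/-- Let `v 1, …, v n` be distinct pairwise-adjacent vertices, `e` a linearly
independent tuple of vectors, `≺` a strict total order on indices refining the
order `v i ≤ v j ↔ lk(v i) ⊆ st(v j)`, and `b i` the unique unit vector in
`K_i^≺ + span{e i}` orthogonal to `K_i^≺` with `⟪e i, b i⟫ > 0`.  Then `e` is
allowable if and only if the vectors `b i` are pairwise orthogonal. -/
theorem stmt_11 [Fintype V] (Γ : SimpleGraph V) {n : ℕ} (v : Fin n → V)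
    (hvinj : Function.Injective v)
    (hadj : ∀ i j : Fin n, i ≠ j → Γ.Adj (v i) (v j))
    (e : Fin n → E) (he : LinearIndependent ℝ e)
    (prec : Fin n → Fin n → Prop) (hso : IsStrictTotalOrder (Fin n) prec)
    (hprec : ∀ i j : Fin n, Γ.neighborSet (v i) ⊆ gstar Γ (v j) →
      ¬ Γ.neighborSet (v j) ⊆ gstar Γ (v i) → prec i j)
    (b : Fin n → E)
    (hb_norm : ∀ i, ‖b i‖ = 1)
    (hb_mem : ∀ i, b i ∈ KprecSpan Γ v e prec i ⊔ Submodule.span ℝ {e i})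
    (hb_orth : ∀ i, ∀ x ∈ KprecSpan Γ v e prec i, (inner ℝ (b i) x : ℝ) = 0)
    (hb_pos : ∀ i, 0 < (inner ℝ (e i) (b i) : ℝ)) :
    Allowable Γ v e ↔ ∀ i j : Fin n, i ≠ j → (inner ℝ (b i) (b j) : ℝ) = 0 := by
  classical
  -- abbreviations
  set R : Fin n → Fin n → Prop := fun i j => gstar Γ (v i) ⊆ gstar Γ (v j) with hRdef
  have hRtrans : ∀ {i j k}, R i j → R j k → R i k := fun h1 h2 => h1.trans h2
  set S : Fin n → Set (Fin n) := fun i => {k | k = i ∨ (k ≠ i ∧ R i k)} with hSdef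
  set T : Fin n → Set (Fin n) := fun i => {k | k ≠ i ∧ R i k ∧ prec i k} with hTdef
  have hK : ∀ i, Kspan Γ v e i = Submodule.span ℝ (e '' S i) := fun _ => rfl
  have hKp : ∀ i, KprecSpan Γ v e prec i = Submodule.span ℝ (e '' T i) := fun _ => rfl
  have hmemS : ∀ i k, R i k → k ∈ S i := by
    intro i k h
    by_cases hk : k = i
    · exact Or.inl hk
    · exact Or.inr ⟨hk, h⟩
  have htrans : ∀ {a c d : Fin n}, prec a c → prec c d → prec a d :=
    fun {a c d} h1 h2 => hso.toIsStrictOrder.toIsTrans.trans a c d h1 h2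
  have hirr : ∀ a : Fin n, ¬ prec a a := fun a => hso.toIsStrictOrder.toIrrefl.irrefl a
  have hasymm : ∀ {a c : Fin n}, prec a c → prec c a → False :=
    fun {a c} h1 h2 => hirr a (htrans h1 h2)
  -- relating R to link inclusions
  have hRlk : ∀ i j, i ≠ j → Γ.neighborSet (v j) ⊆ gstar Γ (v i) → R j i := by
    intro i j hij h x hx
    rcases hx with rfl | hx
    · exact Set.mem_insert_iff.mpr (Or.inr ((Γ.mem_neighborSet _ _).mpr (hadj i j hij)))
    · exact h hx
  have hprec' : ∀ i j, i ≠ j → R i j → ¬ R j i → prec i j := by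
    intro i j hij h1 h2
    exact hprec i j ((Set.subset_insert _ _).trans h1)
      (fun hc => h2 (hRlk i j hij hc))
  -- b i ∈ K i
  have hTle : ∀ i, T i ⊆ S i := by
    rintro i k ⟨hk1, hk2, _⟩; exact Or.inr ⟨hk1, hk2⟩
  have hbK : ∀ i, b i ∈ Kspan Γ v e i := by
    intro i
    refine SetLike.le_def.mp ?_ (hb_mem i)
    apply sup_le
    · rw [hKp, hK]; exact Submodule.span_mono (Set.image_mono (hTle i))
    · rw [hK]
      apply Submodule.span_le.mpr
      rintro x rfl
      · exact Submodule.subset_span ⟨i, Or.inl rfl, rfl⟩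
  -- the key twist-case lemma
  have hF1 : ∀ i j, i ≠ j → R i j → prec i j → (inner ℝ (b i) (b j) : ℝ) = 0 := by
    intro i j hij h1 h2
    apply hb_orth i
    refine SetLike.le_def.mp ?_ (hb_mem j)
    apply sup_le
    · rw [hKp, hKp]
      apply Submodule.span_mono
      apply Set.image_mono
      rintro k ⟨hkj, hRjk, hpjk⟩
      refine ⟨?_, hRtrans h1 hRjk, htrans h2 hpjk⟩
      rintro rfl
      exact absurd h2 (fun h => hasymm h hpjk)
    · rw [hKp]
      apply Submodule.span_le.mpr
      rintro x rfl
      · exact Submodule.subset_span ⟨j, ⟨hij.symm, h1, h2⟩, rfl⟩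
  have hF2 : ∀ i j, i ≠ j → R i j → (inner ℝ (b i) (b j) : ℝ) = 0 := by
    intro i j hij h1
    by_cases h2 : R j i
    · rcases (show prec i j ∨ i = j ∨ prec j i from by
        by_contra hc; push_neg at hc; exact hc.2.1 (hso.trichotomous i j hc.1 hc.2.2)) with hp | hp | hp
      · exact hF1 i j hij h1 hp
      · exact absurd hp hij
      · rw [real_inner_comm]; exact hF1 j i hij.symm h2 hp
    · exact hF1 i j hij h1 (hprec' i j hij h1 h2)
  -- structure of intersections
  have hL : ∀ i j, Kspan Γ v e i ⊓ Kspan Γ v e j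
      = Submodule.span ℝ (e '' (S i ∩ S j)) := by
    intro i j; rw [hK, hK]; exact span_inter_aux he (S i) (S j)
  have hmem_inter : ∀ {i j k : Fin n}, i ≠ j → ¬ R i j → ¬ R j i →
      k ∈ S i → k ∈ S j →
      k ≠ i ∧ k ≠ j ∧ R i k ∧ R j k ∧ prec i k ∧ prec j k := by
    intro i j k hij hnij hnji hki hkj
    rcases hki with rfl | ⟨hki', hRik⟩
    · rcases hkj with h | ⟨_, hRji⟩
      · exact absurd h hij
      · exact absurd hRji hnji
    · rcases hkj with rfl | ⟨hkj', hRjk⟩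
      · exact absurd hRik hnij
      · have hnki : ¬ R k i := fun h => hnji (hRtrans hRjk h)
        have hnkj : ¬ R k j := fun h => hnij (hRtrans hRik h)
        exact ⟨hki', hkj', hRik, hRjk,
          hprec' i k hki'.symm hRik hnki, hprec' j k hkj'.symm hRjk hnkj⟩
  constructor
  · -- Allowable → orthogonality
    intro hA i j hij
    by_cases htw : TwistRelated Γ (v i) (v j)
    · rcases htw with h | h
      · exact hF2 i j hij h
      · rw [real_inner_comm]; exact hF2 j i hij.symm h
    · have hnij : ¬ R i j := fun h => htw (Or.inl h)
      have hnji : ¬ R j i := fun h => htw (Or.inr h)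
      have hborth : ∀ m, (m = i ∨ m = j) →
          b m ∈ (Kspan Γ v e i ⊓ Kspan Γ v e j)ᗮ := by
        intro m hm
        rw [Submodule.mem_orthogonal]
        intro u hu
        rw [hL] at hu
        rw [real_inner_comm]
        refine inner_zero_of_span ?_ u hu
        rintro g ⟨k, ⟨hki, hkj⟩, rfl⟩
        obtain ⟨hk1, hk2, hk3, hk4, hk5, hk6⟩ := hmem_inter hij hnij hnji hki hkj
        apply hb_orth
        rcases hm with rfl | rfl
        · exact Submodule.subset_span ⟨k, ⟨hk1, hk3, hk5⟩, rfl⟩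
        · exact Submodule.subset_span ⟨k, ⟨hk2, hk4, hk6⟩, rfl⟩
      exact hA i j htw (b i) ⟨hbK i, hborth i (Or.inl rfl)⟩
        (b j) ⟨hbK j, hborth j (Or.inr rfl)⟩
  · -- orthogonality → Allowable
    intro hO
    have hON : Orthonormal ℝ b := ⟨hb_norm, fun {i j} hij => hO i j hij⟩
    have hbLI : LinearIndependent ℝ b := hON.linearIndependent
    -- b l ∈ K i whenever l ∈ S i
    have hbK' : ∀ i l, l ∈ S i → b l ∈ Kspan Γ v e i := by
      intro i l hl
      have hle : Kspan Γ v e l ≤ Kspan Γ v e i := by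
        rw [hK, hK]
        apply Submodule.span_mono
        apply Set.image_mono
        intro k hk
        rcases hk with rfl | ⟨_, hRlk⟩
        · exact hl
        · rcases hl with hli | ⟨_, hRil⟩
          · exact hmemS _ k (hli ▸ hRlk)
          · exact hmemS _ k (hRtrans hRil hRlk)
      exact hle (hbK l)
    have hKeqb : ∀ i, Kspan Γ v e i = Submodule.span ℝ (b '' S i) := by
      intro i
      have hle : Submodule.span ℝ (b '' S i) ≤ Kspan Γ v e i := by
        apply Submodule.span_le.mpr
        rintro x ⟨l, hl, rfl⟩
        exact hbK' i l hl
      haveI : FiniteDimensional ℝ (Kspan Γ v e i) := by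
        rw [hK]
        exact FiniteDimensional.span_of_finite ℝ ((Set.toFinite (S i)).image e)
      symm
      apply Submodule.eq_of_le_of_finrank_le hle
      rw [hK, rank_span_image he (S i), rank_span_image hbLI (S i)]
    intro i j htw x hx y hy
    have hij : i ≠ j := by
      rintro rfl
      exact htw (Or.inl (subset_refl _))
    have hnij : ¬ R i j := fun h => htw (Or.inl h)
    have hnji : ¬ R j i := fun h => htw (Or.inr h)
    obtain ⟨hxK, hxL⟩ := hx
    obtain ⟨hyK, _⟩ := hy
    -- x is orthogonal to every b m with m ∈ S j
    have hxb : ∀ m ∈ S j, (inner ℝ x (b m) : ℝ) = 0 := by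
      intro m hm
      by_cases hmi : m ∈ S i
      · -- b m ∈ L, x ∈ Lᗮ
        have hbmL : b m ∈ Kspan Γ v e i ⊓ Kspan Γ v e j :=
          ⟨hbK' i m hmi, hbK' j m hm⟩
        have h := (Submodule.mem_orthogonal _ _).mp hxL (b m) hbmL
        rw [real_inner_comm]; exact h
      · -- m ∉ S i, so b m ⊥ span (b '' S i) ∋ x
        rw [hKeqb] at hxK
        rw [real_inner_comm]
        refine inner_zero_of_span ?_ x hxK
        rintro g ⟨l, hl, rfl⟩
        have hlm : m ≠ l := fun h => hmi (h ▸ hl)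
        exact hO m l hlm
    rw [hKeqb] at hyK
    refine inner_zero_of_span ?_ y hyK
    rintro g ⟨m, hm, rfl⟩
    exact hxb m hm
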